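/- Let n ≥ 2 be an integer, let r ≥ 1 be a real number, let b ≤ ∞, let x₁,…,xₙ ∈ [0,b), and let t₁,…,tₙ > 0 with Σ_{i=1}^n tᵢ = 1. Set x̄ = Σ_{i=1}^n tᵢxᵢ, and for 1 ≤ k ≤ j ≤ n with S := Σ_{i=k}^{j} tᵢ < 1 let x_{k,j} = Σ_{i=k}^{j} tᵢxᵢ / S. Then |x_{k,j} − x̄| ≤ ( Σ_{i=1}^n tᵢ|xᵢ − x̄|^{2r} / ( S + S^{2r}·(1−S)^{1−2r} ) )^{1/(2r)} ≤ ( ( Σ_{i=1}^n tᵢxᵢ^{2r} − x̄^{2r} ) / ( S + S^{2r}·(1−S)^{1−2r} ) )^{1/(2r)}. -/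

import Mathlib

-- superadditivity of rpow for exponent ≥ 1
lemma my_superadd {a b q : ℝ} (ha : 0 ≤ a) (hb : 0 ≤ b) (hq : 1 ≤ q) :
    a ^ q + b ^ q ≤ (a + b) ^ q := by
  have hq0 : q ≠ 0 := by linarith
  have hq1 : (0:ℝ) ≤ q - 1 := by linarith
  have key : ∀ c : ℝ, 0 ≤ c → c ≤ a + b → c ^ q ≤ c * (a + b) ^ (q - 1) := by
    intro c hc hcab
    calc c ^ q = c ^ (1 + (q - 1)) := by ring_nf
      _ = c ^ (1:ℝ) * c ^ (q - 1) := Real.rpow_add' hc (by simpa using hq0)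
      _ = c * c ^ (q - 1) := by rw [Real.rpow_one]
      _ ≤ c * (a + b) ^ (q - 1) :=
          mul_le_mul_of_nonneg_left (Real.rpow_le_rpow hc hcab hq1) hc
  have h1 := key a ha (le_add_of_nonneg_right hb)
  have h2 := key b hb (le_add_of_nonneg_left ha)
  have h3 : (a + b) ^ q = (a + b) * (a + b) ^ (q - 1) := by
    calc (a + b) ^ q = (a + b) ^ (1 + (q - 1)) := by ring_nf
      _ = (a + b) ^ (1:ℝ) * (a + b) ^ (q - 1) :=
          Real.rpow_add' (add_nonneg ha hb) (by simpa using hq0)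
      _ = (a + b) * (a + b) ^ (q - 1) := by rw [Real.rpow_one]
  rw [h3]; nlinarith

-- tangent-line superquadratic inequality for x ↦ x^p, p ≥ 2
lemma my_tangent {p c y : ℝ} (hp : 2 ≤ p) (hc : 0 ≤ c) (hy : 0 ≤ y) :
    c ^ p + p * c ^ (p - 1) * (y - c) + |y - c| ^ p ≤ y ^ p := by
  have hp1 : (1:ℝ) ≤ p := by linarith
  have hp1' : (1:ℝ) ≤ p - 1 := by linarith
  have hp0 : p ≠ 0 := by linarith
  have hcp : c ^ (p - 1) * c = c ^ p := by
    calc c ^ (p - 1) * c = c ^ (p - 1) * c ^ (1:ℝ) := by rw [Real.rpow_one]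
      _ = c ^ (p - 1 + 1) := (Real.rpow_add' hc (by simpa using hp0)).symm
      _ = c ^ p := by ring_nf
  rcases le_total c y with hcy | hcy
  · -- y ≥ c
    rw [abs_of_nonneg (by linarith)]
    set G : ℝ → ℝ := fun u => u ^ p - p * c ^ (p - 1) * u - (u - c) ^ p with hG
    have hderiv : ∀ u : ℝ, HasDerivAt G
        (p * u ^ (p - 1) - p * c ^ (p - 1) - p * (u - c) ^ (p - 1)) u := by
      intro u
      have h1 : HasDerivAt (fun v : ℝ => v ^ p) (p * u ^ (p - 1)) u :=
        Real.hasDerivAt_rpow_const (Or.inr hp1)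
      have h2 : HasDerivAt (fun v : ℝ => p * c ^ (p - 1) * v) (p * c ^ (p - 1)) u := by
        simpa using (hasDerivAt_id u).const_mul (p * c ^ (p - 1))
      have h3 : HasDerivAt (fun v : ℝ => (v - c) ^ p) (p * (u - c) ^ (p - 1)) u := by
        have hi : HasDerivAt (fun v : ℝ => v - c) 1 u := (hasDerivAt_id u).sub_const c
        have := (Real.hasDerivAt_rpow_const (x := u - c) (p := p) (Or.inr hp1)).comp u hi
        simpa [Function.comp_def] using this
      exact (h1.sub h2).sub h3
    have hmono : MonotoneOn G (Set.Ici c) := by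
      apply monotoneOn_of_deriv_nonneg (convex_Ici c)
      · exact fun u _ => ((hderiv u).continuousAt).continuousWithinAt
      · exact fun u _ => ((hderiv u).differentiableAt).differentiableWithinAt
      · intro u hu
        rw [interior_Ici] at hu
        rw [(hderiv u).deriv]
        have hsa : c ^ (p - 1) + (u - c) ^ (p - 1) ≤ u ^ (p - 1) := by
          have := my_superadd hc (by simp at hu; linarith : (0:ℝ) ≤ u - c) hp1'
          simpa using this
        nlinarith [hp0]
    have := hmono (Set.self_mem_Ici) (Set.mem_Ici.mpr hcy) hcy
    simp only [hG] at this
    have h0 : ((c : ℝ) - c) ^ p = 0 := by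
      rw [sub_self, Real.zero_rpow hp0]
    rw [h0] at this
    nlinarith [hcp]
  · -- y ≤ c
    rw [abs_of_nonpos (by linarith), neg_sub]
    set G : ℝ → ℝ := fun u => u ^ p - p * c ^ (p - 1) * u - (c - u) ^ p with hG
    have hderiv : ∀ u : ℝ, HasDerivAt G
        (p * u ^ (p - 1) - p * c ^ (p - 1) + p * (c - u) ^ (p - 1)) u := by
      intro u
      have h1 : HasDerivAt (fun v : ℝ => v ^ p) (p * u ^ (p - 1)) u :=
        Real.hasDerivAt_rpow_const (Or.inr hp1)
      have h2 : HasDerivAt (fun v : ℝ => p * c ^ (p - 1) * v) (p * c ^ (p - 1)) u := by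
        simpa using (hasDerivAt_id u).const_mul (p * c ^ (p - 1))
      have h3 : HasDerivAt (fun v : ℝ => (c - v) ^ p) (-(p * (c - u) ^ (p - 1))) u := by
        have hi : HasDerivAt (fun v : ℝ => c - v) (-1) u := by
          simpa using (hasDerivAt_id u).const_sub c
        have := (Real.hasDerivAt_rpow_const (x := c - u) (p := p) (Or.inr hp1)).comp u hi
        simpa [Function.comp_def] using this
      have := (h1.sub h2).sub h3
      rw [sub_neg_eq_add] at this
      exact this
    have hanti : AntitoneOn G (Set.Icc 0 c) := by
      apply antitoneOn_of_deriv_nonpos (convex_Icc 0 c)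
      · exact fun u _ => ((hderiv u).continuousAt).continuousWithinAt
      · exact fun u _ => ((hderiv u).differentiableAt).differentiableWithinAt
      · intro u hu
        rw [interior_Icc] at hu
        obtain ⟨hu0, huc⟩ := hu
        rw [(hderiv u).deriv]
        have hsa : u ^ (p - 1) + (c - u) ^ (p - 1) ≤ c ^ (p - 1) := by
          have := my_superadd (le_of_lt hu0) (by linarith : (0:ℝ) ≤ c - u) hp1'
          simpa using this
        nlinarith [hp0]
    have := hanti (Set.mem_Icc.mpr ⟨hy, hcy⟩) (Set.mem_Icc.mpr ⟨hc, le_refl c⟩) hcy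
    simp only [hG] at this
    have h0 : ((c : ℝ) - c) ^ p = 0 := by rw [sub_self, Real.zero_rpow hp0]
    rw [h0] at this
    nlinarith [hcp]
lemma my_gap {s : Finset ℕ} {t x : ℕ → ℝ} {p : ℝ} (hp : 2 ≤ p)
    (ht : ∀ i ∈ s, 0 ≤ t i) (hx : ∀ i ∈ s, 0 ≤ x i) (hts : ∑ i ∈ s, t i = 1) :
    ∑ i ∈ s, t i * |x i - ∑ i ∈ s, t i * x i| ^ p ≤
      (∑ i ∈ s, t i * x i ^ p) - (∑ i ∈ s, t i * x i) ^ p := by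
  set m := ∑ i ∈ s, t i * x i with hm
  have hm0 : 0 ≤ m := Finset.sum_nonneg fun i hi => mul_nonneg (ht i hi) (hx i hi)
  have key : ∀ i ∈ s, t i * (m ^ p + p * m ^ (p - 1) * (x i - m) + |x i - m| ^ p)
      ≤ t i * x i ^ p :=
    fun i hi => mul_le_mul_of_nonneg_left (my_tangent hp hm0 (hx i hi)) (ht i hi)
  have hsum := Finset.sum_le_sum key
  have e0 : ∑ i ∈ s, t i * (x i - m) = 0 := by
    simp only [mul_sub]
    rw [Finset.sum_sub_distrib, ← Finset.sum_mul, hts, one_mul, ← hm, sub_self]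
  have expand : ∑ i ∈ s, t i * (m ^ p + p * m ^ (p - 1) * (x i - m) + |x i - m| ^ p)
      = m ^ p + ∑ i ∈ s, t i * |x i - m| ^ p := by
    have step : ∀ i ∈ s, t i * (m ^ p + p * m ^ (p - 1) * (x i - m) + |x i - m| ^ p)
        = t i * m ^ p + p * m ^ (p - 1) * (t i * (x i - m)) + t i * |x i - m| ^ p := by
      intro i _; ring
    rw [Finset.sum_congr rfl step, Finset.sum_add_distrib, Finset.sum_add_distrib,
      ← Finset.sum_mul, hts, one_mul, ← Finset.mul_sum, e0, mul_zero, add_zero]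
  rw [expand] at hsum
  linarith

-- block Jensen
lemma my_block {s : Finset ℕ} {t x : ℕ → ℝ} {W m p : ℝ} (hp : 1 ≤ p)
    (ht : ∀ i ∈ s, 0 ≤ t i) (hW : 0 < W) (hWs : ∑ i ∈ s, t i = W) :
    W * (|∑ i ∈ s, t i * (x i - m)| / W) ^ p ≤ ∑ i ∈ s, t i * |x i - m| ^ p := by
  have hp0 : (0:ℝ) ≤ p := by linarith
  have habs : |∑ i ∈ s, t i * (x i - m)| / W ≤ ∑ i ∈ s, (t i / W) * |x i - m| := by
    rw [div_le_iff₀ hW]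
    calc |∑ i ∈ s, t i * (x i - m)| ≤ ∑ i ∈ s, |t i * (x i - m)| :=
          Finset.abs_sum_le_sum_abs _ _
      _ = ∑ i ∈ s, t i * |x i - m| := by
          refine Finset.sum_congr rfl fun i hi => ?_
          rw [abs_mul, abs_of_nonneg (ht i hi)]
      _ = (∑ i ∈ s, (t i / W) * |x i - m|) * W := by
          rw [Finset.sum_mul]
          refine Finset.sum_congr rfl fun i hi => ?_
          field_simp
  have hnn : 0 ≤ |∑ i ∈ s, t i * (x i - m)| / W := div_nonneg (abs_nonneg _) hW.le
  have h1 := Real.rpow_le_rpow hnn habs hp0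
  have h2 := Real.rpow_arith_mean_le_arith_mean_rpow s (fun i => t i / W)
      (fun i => |x i - m|) (fun i hi => div_nonneg (ht i hi) hW.le)
      (by rw [← Finset.sum_div, hWs, div_self hW.ne']) (fun i _ => abs_nonneg _) hp
  have h3 : (|∑ i ∈ s, t i * (x i - m)| / W) ^ p ≤ ∑ i ∈ s, (t i / W) * |x i - m| ^ p :=
    le_trans h1 h2
  calc W * (|∑ i ∈ s, t i * (x i - m)| / W) ^ p
      ≤ W * ∑ i ∈ s, (t i / W) * |x i - m| ^ p :=
        mul_le_mul_of_nonneg_left h3 hW.le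
    _ = ∑ i ∈ s, t i * |x i - m| ^ p := by
        rw [Finset.mul_sum]
        refine Finset.sum_congr rfl fun i hi => ?_
        field_simp

/-- Corollary 1 a. of the paper: block average deviation bound together with
the superquadratic (Jensen-gap) bound for `x ↦ x^(2r)` on `[0, b)`, `b ≤ ∞`. -/
theorem stmt_10 (n : ℕ) (hn : 2 ≤ n) (r : ℝ) (hr : 1 ≤ r)
    (b : EReal) (x t : ℕ → ℝ)
    (hx : ∀ i ∈ Finset.Icc 1 n, 0 ≤ x i ∧ (x i : EReal) < b)
    (ht : ∀ i ∈ Finset.Icc 1 n, 0 < t i)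
    (htsum : ∑ i ∈ Finset.Icc 1 n, t i = 1)
    (xbar : ℝ) (hxbar : xbar = ∑ i ∈ Finset.Icc 1 n, t i * x i)
    (k j : ℕ) (hk : 1 ≤ k) (hkj : k ≤ j) (hjn : j ≤ n)
    (S : ℝ) (hS : S = ∑ i ∈ Finset.Icc k j, t i) (hS1 : S < 1) :
    |(∑ i ∈ Finset.Icc k j, t i * x i) / S - xbar| ≤
      ((∑ i ∈ Finset.Icc 1 n, t i * |x i - xbar| ^ (2*r)) /
        (S + S ^ (2*r) * (1 - S) ^ (1 - 2*r))) ^ (1/(2*r)) ∧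
    ((∑ i ∈ Finset.Icc 1 n, t i * |x i - xbar| ^ (2*r)) /
        (S + S ^ (2*r) * (1 - S) ^ (1 - 2*r))) ^ (1/(2*r)) ≤
      (((∑ i ∈ Finset.Icc 1 n, t i * x i ^ (2*r)) - xbar ^ (2*r)) /
        (S + S ^ (2*r) * (1 - S) ^ (1 - 2*r))) ^ (1/(2*r)) := by
  set p := 2 * r with hpdef
  have hp2 : (2:ℝ) ≤ p := by rw [hpdef]; linarith
  have hp1 : (1:ℝ) ≤ p := by linarith
  have hppos : (0:ℝ) < p := by linarith
  have hsub : Finset.Icc k j ⊆ Finset.Icc 1 n := Finset.Icc_subset_Icc hk hjn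
  have hSpos : 0 < S := by
    rw [hS]
    exact Finset.sum_pos (fun i hi => ht i (hsub hi)) (Finset.nonempty_Icc.mpr hkj)
  have hT : 0 < 1 - S := sub_pos.mpr hS1
  set C := Finset.Icc 1 n \ Finset.Icc k j with hCdef
  have hCsum : ∑ i ∈ C, t i = 1 - S := by
    rw [hCdef, Finset.sum_sdiff_eq_sub hsub, htsum, hS]
  set d := (∑ i ∈ Finset.Icc k j, t i * x i) / S - xbar with hd
  have hblocksum : ∑ i ∈ Finset.Icc k j, t i * (x i - xbar) = S * d := by
    simp only [mul_sub]
    rw [Finset.sum_sub_distrib, ← Finset.sum_mul, ← hS, hd]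
    field_simp
  have hCsum2 : ∑ i ∈ C, t i * (x i - xbar) = -(S * d) := by
    have hfull : ∑ i ∈ Finset.Icc 1 n, t i * (x i - xbar) = 0 := by
      simp only [mul_sub]
      rw [Finset.sum_sub_distrib, ← Finset.sum_mul, htsum, one_mul, ← hxbar, sub_self]
    rw [hCdef, Finset.sum_sdiff_eq_sub hsub, hfull, hblocksum, zero_sub]
  -- block estimate
  have hB : S * |d| ^ p ≤ ∑ i ∈ Finset.Icc k j, t i * |x i - xbar| ^ p := by
    have := my_block (t := t) (x := x) (m := xbar) hp1
      (fun i hi => (ht i (hsub hi)).le) hSpos hS.symm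
    rwa [hblocksum, abs_mul, abs_of_pos hSpos, mul_div_cancel_left₀ _ hSpos.ne'] at this
  -- complement estimate
  have hCb : S ^ p * (1 - S) ^ (1 - p) * |d| ^ p ≤ ∑ i ∈ C, t i * |x i - xbar| ^ p := by
    have := my_block (t := t) (x := x) (m := xbar) hp1
      (fun i hi => (ht i (Finset.sdiff_subset hi)).le) hT hCsum
    rw [hCsum2, abs_neg, abs_mul, abs_of_pos hSpos] at this
    have heq : (1 - S) * (S * |d| / (1 - S)) ^ p = S ^ p * (1 - S) ^ (1 - p) * |d| ^ p := by
      rw [Real.div_rpow (mul_nonneg hSpos.le (abs_nonneg d)) hT.le,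
        Real.mul_rpow hSpos.le (abs_nonneg d), Real.rpow_sub hT, Real.rpow_one]
      field_simp
    rwa [heq] at this
  set D := S + S ^ p * (1 - S) ^ (1 - p) with hDdef
  have hDpos : 0 < D := by
    have := Real.rpow_pos_of_pos hSpos p
    have := Real.rpow_pos_of_pos hT (1 - p)
    rw [hDdef]; positivity
  set N := ∑ i ∈ Finset.Icc 1 n, t i * |x i - xbar| ^ p with hN
  have hsplit : N = (∑ i ∈ C, t i * |x i - xbar| ^ p)
      + ∑ i ∈ Finset.Icc k j, t i * |x i - xbar| ^ p := by
    rw [hN, hCdef, ← Finset.sum_sdiff hsub]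
  have hDN : D * |d| ^ p ≤ N := by
    rw [hsplit, hDdef]
    nlinarith [hB, hCb]
  have hdp : |d| ^ p ≤ N / D := (le_div_iff₀ hDpos).mpr (by nlinarith)
  constructor
  · have hrw : |d| = (|d| ^ p) ^ (1 / p) := by
      rw [← Real.rpow_mul (abs_nonneg d), mul_one_div, div_self hppos.ne', Real.rpow_one]
    calc |d| = (|d| ^ p) ^ (1 / p) := hrw
      _ ≤ (N / D) ^ (1 / p) :=
          Real.rpow_le_rpow (Real.rpow_nonneg (abs_nonneg d) p) hdp (by positivity)
  · have hgap := my_gap (s := Finset.Icc 1 n) (t := t) (x := x) hp2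
      (fun i hi => (ht i hi).le) (fun i hi => (hx i hi).1) htsum
    rw [← hxbar] at hgap
    have hN0 : 0 ≤ N := by
      rw [hN]
      exact Finset.sum_nonneg fun i hi =>
        mul_nonneg (ht i hi).le (Real.rpow_nonneg (abs_nonneg _) p)
    refine Real.rpow_le_rpow (by positivity) ?_ (by positivity)
    gcongr
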